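/- Theorem (the weak variant ALSO-X#-underline is better than the CVaR approximation). For every t ∈ ℝ the following holds: if there exist x ∈ F_t and β ≤ 0 with C(x, β) ≤ 0 (i.e., the CVaR approximation is feasible at objective level t), then for every minimizer (x*, β*) of C over F_t × ℝ, the point x* is feasible. -/

import Mathlib

open MeasureTheory

/-- **The weak variant ALSO-X#-underline is better than the CVaR approximation.**
If at level `t` the CVaR approximation is feasible (there are `x ∈ F t` and `β ≤ 0` with
`C x β ≤ 0`), then every minimizer of the lower-level ALSO-X#-underline problem (with `β`
unconstrained) has a feasible `x`-component. -/
theorem weak_alsoxSharp_better_than_cvar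
    (n m I : ℕ) (hn : 1 ≤ n) (hm : 1 ≤ m) (hI : 1 ≤ I)
    (c : Fin n → ℝ) (X : Set (Fin n → ℝ))
    (ε : ℝ) (hε : ε ∈ Set.Ioo (0 : ℝ) 1)
    (θ : ℝ) (hθ : 0 ≤ θ)
    -- `N` is a norm on ℝᵐ (playing the role of the dual norm)
    (N : (Fin m → ℝ) → ℝ)
    (hN_tri : ∀ v w, N (v + w) ≤ N v + N w)
    (hN_smul : ∀ (r : ℝ) (v), N (r • v) = |r| * N v)
    (hN_def : ∀ v, N v = 0 → v = 0)
    -- affine maps `a i : ℝⁿ → ℝᵐ`, `b i : ℝⁿ → ℝ`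
    (a : Fin I → ((Fin n → ℝ) →ᵃ[ℝ] (Fin m → ℝ)))
    (b : Fin I → ((Fin n → ℝ) →ᵃ[ℝ] ℝ))
    -- reference distribution
    (P : Measure (Fin m → ℝ)) [IsProbabilityMeasure P]
    (hint : ∀ x : Fin n → ℝ,
      Integrable (fun ζ => ⨆ i : Fin I, |∑ k, a i x k * ζ k|) P)
    -- `f x ζ = max_i (θ N(aᵢ(x)) + aᵢ(x)ᵀζ - bᵢ(x))`
    (f : (Fin n → ℝ) → (Fin m → ℝ) → ℝ)
    (hf : ∀ x ζ, f x ζ = ⨆ i : Fin I, (θ * N (a i x) + ∑ k, a i x k * ζ k - b i x))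
    -- feasibility for the distributionally robust chance constraint
    (feasible : (Fin n → ℝ) → Prop)
    (hfeas : ∀ x, feasible x ↔ 1 - ε ≤ (P {ζ | f x ζ ≤ 0}).toReal)
    -- `F t = {x ∈ X : cᵀx ≤ t}`
    (F : ℝ → Set (Fin n → ℝ))
    (hF : ∀ t, F t = {x ∈ X | ∑ k, c k * x k ≤ t})
    -- hinge loss (lower-level ALSO-X objective)
    (H : (Fin n → ℝ) → ℝ)
    (hH : ∀ x, H x = ∫ ζ, max (f x ζ) 0 ∂P)
    -- CVaR loss (lower-level CVaR / ALSO-X#-underline objective)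
    (C : (Fin n → ℝ) → ℝ → ℝ)
    (hC : ∀ x β, C x β = ε * β + ∫ ζ, max (f x ζ - β) 0 ∂P) :
    ∀ t : ℝ,
      (∃ x ∈ F t, ∃ β ≤ (0 : ℝ), C x β ≤ 0) →
      ∀ (xstar : Fin n → ℝ) (βstar : ℝ), (xstar, βstar) ∈ F t ×ˢ (Set.univ : Set ℝ) →
        IsMinOn (fun q : (Fin n → ℝ) × ℝ => C q.1 q.2) (F t ×ˢ (Set.univ : Set ℝ)) (xstar, βstar) →
        feasible xstar := by
  obtain ⟨hε0, hε1⟩ := hε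
  rintro t ⟨x, hxF, β, hβ, hCxβ⟩ xstar βstar hmem hmin
  have hIne : Nonempty (Fin I) := ⟨⟨0, hI⟩⟩
  -- the minimizer has value ≤ 0
  have hC0 : C xstar βstar ≤ 0 :=
    le_trans (hmin (Set.mk_mem_prod hxF (Set.mem_univ β))) hCxβ
  set g : (Fin m → ℝ) → ℝ := fun ζ => f xstar ζ with hg
  -- measurability of g
  have hmeas : Measurable g := by
    have hge : g = fun ζ => ⨆ i : Fin I,
        (θ * N (a i xstar) + ∑ k, a i xstar k * ζ k - b i xstar) :=
      funext fun ζ => hf xstar ζ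
    rw [hge]
    refine Measurable.iSup fun i => ?_
    refine Measurable.sub ?_ measurable_const
    refine Measurable.add measurable_const ?_
    exact Finset.measurable_sum _ fun k _ => (measurable_pi_apply k).const_mul _
  -- nonnegativity of N
  have hN0 : N 0 = 0 := by
    have := hN_smul 0 0
    simpa using this
  have hNnn : ∀ v, 0 ≤ N v := by
    intro v
    have h1 : N (v + (-1 : ℝ) • v) ≤ N v + N ((-1 : ℝ) • v) := hN_tri v _
    have h2 : N ((-1 : ℝ) • v) = N v := by rw [hN_smul]; simp
    have h3 : v + (-1 : ℝ) • v = 0 := by simp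
    rw [h3, hN0, h2] at h1
    linarith
  set G : (Fin m → ℝ) → ℝ := fun ζ => ⨆ i : Fin I, |∑ k, a i xstar k * ζ k| with hGdef
  have hGint : Integrable G P := hint xstar
  have hGnn : ∀ ζ, 0 ≤ G ζ := by
    intro ζ
    have := le_ciSup (Set.Finite.bddAbove (Set.finite_range
      (fun i : Fin I => |∑ k, a i xstar k * ζ k|))) (Classical.arbitrary (Fin I))
    exact le_trans (abs_nonneg _) this
  set K : ℝ := ⨆ i : Fin I, (θ * N (a i xstar) + |b i xstar|) with hKdef
  have hKnn : 0 ≤ K := by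
    have := le_ciSup (Set.Finite.bddAbove (Set.finite_range
      (fun i : Fin I => θ * N (a i xstar) + |b i xstar|))) (Classical.arbitrary (Fin I))
    refine le_trans ?_ this
    have := hNnn (a (Classical.arbitrary (Fin I)) xstar)
    positivity
  -- pointwise bound
  have hbound : ∀ (β' : ℝ) (ζ), max (g ζ - β') 0 ≤ K + |β'| + G ζ := by
    intro β' ζ
    have hpos : (0 : ℝ) ≤ K + |β'| + G ζ := by
      have := hGnn ζ
      positivity
    refine max_le ?_ hpos
    simp only [hg]
    rw [hf, sub_le_iff_le_add]
    refine ciSup_le fun i => ?_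
    have h1 : θ * N (a i xstar) + |b i xstar| ≤ K :=
      le_ciSup (f := fun j : Fin I => θ * N (a j xstar) + |b j xstar|)
        (Set.Finite.bddAbove (Set.finite_range _)) i
    have h2 : |∑ k, a i xstar k * ζ k| ≤ G ζ :=
      le_ciSup (f := fun j : Fin I => |∑ k, a j xstar k * ζ k|)
        (Set.Finite.bddAbove (Set.finite_range _)) i
    have h3 : ∑ k, a i xstar k * ζ k ≤ |∑ k, a i xstar k * ζ k| := le_abs_self _
    have h4 : -b i xstar ≤ |b i xstar| := neg_le_abs _
    have h5 : -β' ≤ |β'| := neg_le_abs _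
    linarith
  -- integrability of the hinge
  have hhint : ∀ β' : ℝ, Integrable (fun ζ => max (g ζ - β') 0) P := by
    intro β'
    refine Integrable.mono ((integrable_const (K + |β'|)).add hGint)
      (((hmeas.sub measurable_const).max measurable_const).aestronglyMeasurable) ?_
    refine Filter.Eventually.of_forall fun ζ => ?_
    rw [Real.norm_eq_abs, Real.norm_eq_abs,
      abs_of_nonneg (le_max_right (g ζ - β') 0)]
    exact le_trans (hbound β' ζ) (le_abs_self _)
  -- βstar ≤ 0
  have hintnn : 0 ≤ ∫ ζ, max (g ζ - βstar) 0 ∂P :=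
    integral_nonneg fun ζ => le_max_right _ _
  rw [hC] at hC0
  have hβstar : βstar ≤ 0 := by nlinarith
  -- the bad set
  set S : Set (Fin m → ℝ) := {ζ | 0 < g ζ} with hSdef
  have hSmeas : MeasurableSet S := measurableSet_lt measurable_const hmeas
  have hS1 : P S ≤ 1 := prob_le_one
  have hkey : (P S).toReal ≤ ε := by
    rcases lt_or_eq_of_le hβstar with hlt | heq
    · -- βstar < 0
      have hind : ∀ ζ, S.indicator (fun _ => -βstar) ζ ≤ max (g ζ - βstar) 0 := by
        intro ζ
        by_cases hζ : ζ ∈ S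
        · rw [Set.indicator_of_mem hζ]
          have : 0 < g ζ := hζ
          exact le_trans (by linarith) (le_max_left _ _)
        · rw [Set.indicator_of_notMem hζ]
          exact le_max_right _ _
      have hindint : Integrable (S.indicator (fun _ => -βstar)) P :=
        (integrable_const (-βstar)).indicator hSmeas
      have hIle : ∫ ζ, S.indicator (fun _ => -βstar) ζ ∂P ≤ ∫ ζ, max (g ζ - βstar) 0 ∂P :=
        integral_mono hindint (hhint βstar) hind
      rw [integral_indicator_const (-βstar) hSmeas] at hIle
      have : (P S).toReal * (-βstar) ≤ -(ε * βstar) := by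
        rw [smul_eq_mul, measureReal_def] at hIle
        linarith
      nlinarith
    · -- βstar = 0
      subst heq
      have h0 : ∫ ζ, max (g ζ - 0) 0 ∂P ≤ 0 := by nlinarith
      have hz : ∫ ζ, max (g ζ - 0) 0 ∂P = 0 := le_antisymm h0 hintnn
      have hae : (fun ζ => max (g ζ - 0) 0) =ᵐ[P] 0 :=
        (integral_eq_zero_iff_of_nonneg (fun ζ => le_max_right _ _) (hhint 0)).mp hz
      have hae' : ∀ᵐ ζ ∂P, g ζ ≤ 0 := by
        filter_upwards [hae] with ζ hζ
        simp only [Pi.zero_apply, sub_zero, max_eq_right_iff] at hζ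
        exact hζ
      have : P S = 0 := by
        have := ae_iff.mp hae'
        convert this using 2
        ext ζ
        simp [hSdef, not_le]
      simp [this]
      linarith
  -- conclude
  rw [hfeas]
  have hScompl : {ζ | f xstar ζ ≤ 0} = Sᶜ := by
    ext ζ
    simp [hSdef, hg, not_lt]
  rw [hScompl, prob_compl_eq_one_sub hSmeas,
    ENNReal.toReal_sub_of_le hS1 ENNReal.one_ne_top]
  simp only [ENNReal.toReal_one]
  linarith
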